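/- Let w be the polyhedral weight function on the cone Cone(f̄, μ) determined by the polytope Δ_∞(f̄, μ) (i.e., w(v) is the least b ≥ 0 with v ∈ b·Δ_∞(f̄, μ)). Then for v in the subcone Cone(τ, μ) one has w(v) = l_{(τ,μ)}(v) = l_σ(v) + (1 − l_σ(μ)) φ^{(τ)}(v)/φ^{(τ)}(μ), and for v ∈ Cone(f̄) one has w(v) = l_σ(v). Equivalently, w(v) = l_σ(v) + m(v)(1 − l_σ(μ)) for all v in the cone. -/

import Mathlib

open Pointwise

/-- The cone over a set: all nonnegative multiples of its points. -/
def coneOver {V : Type*} [AddCommMonoid V] [Module ℝ V] (A : Set V) : Set V :=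
  {x | ∃ c : ℝ, 0 ≤ c ∧ ∃ y ∈ A, x = c • y}

/-- The polyhedral weight of `v` determined by a polytope `Δ`: the least `b ≥ 0`
with `v ∈ b • Δ`. -/
noncomputable def polyWeight {V : Type*} [AddCommMonoid V] [Module ℝ V]
    (Δ : Set V) (v : V) : ℝ :=
  sInf {b : ℝ | 0 ≤ b ∧ v ∈ b • Δ}

/-- Key tool: if `L ≤ 1` on `Δ`, `v = c • y` with `c ≥ 0`, `y ∈ Δ` and `L y = 1`,
then the polyhedral weight of `v` is exactly `c`. -/
lemma polyWeight_eq_of_functional {n : ℕ} (Δ : Set (Fin n → ℝ))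
    (L : (Fin n → ℝ) →ₗ[ℝ] ℝ) (hΔ : ∀ x ∈ Δ, L x ≤ 1)
    {v : Fin n → ℝ} {c : ℝ} (hc : 0 ≤ c)
    {y : Fin n → ℝ} (hy : y ∈ Δ) (hLy : L y = 1) (hv : v = c • y) :
    polyWeight Δ v = c := by
  have hmem : c ∈ {b : ℝ | 0 ≤ b ∧ v ∈ b • Δ} :=
    ⟨hc, hv ▸ Set.smul_mem_smul_set hy⟩
  have hLv : L v = c := by rw [hv, map_smul, smul_eq_mul, hLy, mul_one]
  refine le_antisymm (csInf_le ⟨0, fun b hb => hb.1⟩ hmem) ?_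
  refine le_csInf ⟨c, hmem⟩ ?_
  rintro b ⟨hb, hbv⟩
  obtain ⟨x, hx, hbx⟩ := Set.mem_smul_set.mp hbv
  have : L v ≤ b := by
    rw [← hbx, map_smul, smul_eq_mul]
    calc b * L x ≤ b * 1 := mul_le_mul_of_nonneg_left (hΔ x hx) hb
      _ = b := mul_one b
  linarith [hLv ▸ this]

/-- explicit description of the weight function `w` of
`Δ_∞(f̄, μ) = conv(S ∪ {0, μ})` on the chambers of `Cone(f̄, μ)`:
`w = l_{(τ,μ)} = l_σ + (1 - l_σ(μ)) φ^{(τ)}/φ^{(τ)}(μ)` on `Cone(τ, μ)`,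
`w = l_σ` on `Cone(f̄)`, and equivalently `w = l_σ + m·(1 - l_σ(μ))`. -/
theorem stmt6 {n : ℕ} {ι : Type*} (S : Finset (Fin n → ℝ))
    (lσ : (Fin n → ℝ) →ₗ[ℝ] ℝ) (φ : ι → ((Fin n → ℝ) →ₗ[ℝ] ℝ))
    (μ : Fin n → ℝ)
    (hS : ∀ x ∈ S, lσ x = 1) (hμlt : lσ μ < 1)
    (hμout : μ ∉ coneOver (convexHull ℝ (S : Set (Fin n → ℝ))))
    (hφμ : ∀ i, φ i μ < 0)
    (hφpos : ∀ i, ∀ x ∈ convexHull ℝ (S : Set (Fin n → ℝ)), 0 ≤ φ i x)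
    (m : (Fin n → ℝ) → ℝ)
    (hm1 : ∀ i, ∀ v ∈ coneOver (convexHull ℝ
        ({x ∈ convexHull ℝ (S : Set (Fin n → ℝ)) | φ i x = 0} ∪ {μ})),
      m v = φ i v / φ i μ)
    (hm2 : ∀ v ∈ coneOver (convexHull ℝ (S : Set (Fin n → ℝ))), m v = 0)
    (hcover : coneOver (convexHull ℝ ((S : Set (Fin n → ℝ)) ∪ {μ})) =
      coneOver (convexHull ℝ (S : Set (Fin n → ℝ))) ∪
        ⋃ i, coneOver (convexHull ℝ
          ({x ∈ convexHull ℝ (S : Set (Fin n → ℝ)) | φ i x = 0} ∪ {μ}))) :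
    (∀ i, ∀ v ∈ coneOver (convexHull ℝ
        ({x ∈ convexHull ℝ (S : Set (Fin n → ℝ)) | φ i x = 0} ∪ {μ})),
      polyWeight (convexHull ℝ ((S : Set (Fin n → ℝ)) ∪ {0, μ})) v =
        lσ v + (1 - lσ μ) * (φ i v / φ i μ)) ∧
    (∀ v ∈ coneOver (convexHull ℝ (S : Set (Fin n → ℝ))),
      polyWeight (convexHull ℝ ((S : Set (Fin n → ℝ)) ∪ {0, μ})) v = lσ v) ∧
    (∀ v ∈ coneOver (convexHull ℝ ((S : Set (Fin n → ℝ)) ∪ {μ})),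
      polyWeight (convexHull ℝ ((S : Set (Fin n → ℝ)) ∪ {0, μ})) v =
        lσ v + m v * (1 - lσ μ)) := by
  set Δ : Set (Fin n → ℝ) := convexHull ℝ ((S : Set (Fin n → ℝ)) ∪ {0, μ}) with hΔdef
  -- lσ = 1 on conv S
  have hconvS1 : ∀ x ∈ convexHull ℝ (S : Set (Fin n → ℝ)), lσ x = 1 := by
    intro x hx
    exact convexHull_min (fun y hy => hS y hy) (convex_hyperplane lσ.isLinear 1) hx
  -- conv S ⊆ Δ
  have hSΔ : convexHull ℝ (S : Set (Fin n → ℝ)) ⊆ Δ :=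
    convexHull_mono Set.subset_union_left
  -- μ ∈ Δ
  have hμΔ : μ ∈ Δ :=
    subset_convexHull ℝ _ (Or.inr (Or.inr rfl))
  -- Part 2
  have part2 : ∀ v ∈ coneOver (convexHull ℝ (S : Set (Fin n → ℝ))),
      polyWeight Δ v = lσ v := by
    rintro v ⟨c, hc, y, hy, rfl⟩
    have hΔle : ∀ x ∈ Δ, lσ x ≤ 1 := by
      intro x hx
      refine convexHull_min ?_ (convex_halfSpace_le lσ.isLinear 1) hx
      rintro z (hz | hz | hz)
      · exact (hS z hz).le
      · simp [hz]
      · rw [Set.mem_singleton_iff] at hz; rw [hz]; exact hμlt.le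
    have hly : lσ y = 1 := hconvS1 y hy
    rw [polyWeight_eq_of_functional Δ lσ hΔle hc (hSΔ hy) hly rfl]
    rw [map_smul, smul_eq_mul, hly, mul_one]
  -- Part 1
  have part1 : ∀ i, ∀ v ∈ coneOver (convexHull ℝ
        ({x ∈ convexHull ℝ (S : Set (Fin n → ℝ)) | φ i x = 0} ∪ {μ})),
      polyWeight Δ v = lσ v + (1 - lσ μ) * (φ i v / φ i μ) := by
    intro i
    rintro v ⟨c, hc, y, hy, rfl⟩
    have hφμne : φ i μ ≠ 0 := (hφμ i).ne
    set k : ℝ := (1 - lσ μ) / φ i μ with hkdef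
    have hk : k ≤ 0 :=
      div_nonpos_of_nonneg_of_nonpos (by linarith) (hφμ i).le
    set L : (Fin n → ℝ) →ₗ[ℝ] ℝ := lσ + k • φ i with hLdef
    have hLval : ∀ z, L z = lσ z + k * φ i z := fun z => rfl
    have hLμ : L μ = 1 := by
      rw [hLval, hkdef]
      field_simp
      ring
    -- L ≤ 1 on Δ
    have hΔle : ∀ x ∈ Δ, L x ≤ 1 := by
      intro x hx
      refine convexHull_min ?_ (convex_halfSpace_le L.isLinear 1) hx
      rintro z (hz | hz | hz)
      · have hφz : 0 ≤ φ i z := hφpos i z (subset_convexHull ℝ _ hz)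
        have h0 : k * φ i z ≤ 0 := mul_nonpos_of_nonpos_of_nonneg hk hφz
        show L z ≤ 1
        rw [hLval, hS z hz]; linarith
      · show L z ≤ 1; simp [hLval, hz]
      · rw [Set.mem_singleton_iff] at hz
        show L z ≤ 1; rw [hz, hLμ]
    -- L = 1 on the face hull
    have hLy : L y = 1 := by
      refine convexHull_min ?_ (convex_hyperplane L.isLinear 1) hy
      rintro z (⟨hz1, hz2⟩ | hz)
      · show L z = 1
        rw [hLval, hconvS1 z hz1, hz2, mul_zero, add_zero]
      · rw [Set.mem_singleton_iff] at hz
        show L z = 1; rw [hz, hLμ]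
    -- y ∈ Δ
    have hyΔ : y ∈ Δ := by
      refine convexHull_min ?_ (convex_convexHull ℝ _) hy
      rintro z (⟨hz1, _⟩ | hz)
      · exact hSΔ hz1
      · rw [Set.mem_singleton_iff] at hz; rw [hz]; exact hμΔ
    rw [polyWeight_eq_of_functional Δ L hΔle hc hyΔ hLy rfl]
    have : lσ (c • y) + (1 - lσ μ) * (φ i (c • y) / φ i μ) = L (c • y) := by
      rw [hLval, hkdef]
      field_simp
    rw [this, map_smul, smul_eq_mul, hLy, mul_one]
  refine ⟨part1, part2, ?_⟩
  intro v hv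
  rw [hcover] at hv
  rcases hv with hv | hv
  · rw [hm2 v hv, zero_mul, add_zero]
    exact part2 v hv
  · obtain ⟨i, hvi⟩ := Set.mem_iUnion.mp hv
    rw [hm1 i v hvi, part1 i v hvi]
    ring
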